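/- Let Λ = ℤ + ℤi ⊆ ℂ be the Gaussian lattice and E = ℂ/Λ, and take ω = 2 + i and ω' = 1 − 2i (so that ω·Λ ⊆ Λ and ω'·Λ ⊆ Λ, and ω² = −ω'²). Then the diagonal Δ' ⊆ E/± × E/± satisfies (φ_ω × φ_{ω'})^{2}(Δ') = Δ'; that is, Δ' is pre-periodic for φ_ω × φ_{ω'} with pair (0,2). -/

import Mathlib

open Complex

noncomputable section

/-- The analytic model `E = ℂ/Λ` of an elliptic curve with period lattice `Λ`. -/
abbrev EC (Λ : AddSubgroup ℂ) : Type := ℂ ⧸ Λ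

/-- The endomorphism `[ω] : E → E` induced by multiplication by `ω` on `ℂ`,
for `ω` with `ω·Λ ⊆ Λ`. -/
def mulE (Λ : AddSubgroup ℂ) (ω : ℂ) (hω : ∀ x ∈ Λ, ω * x ∈ Λ) : EC Λ →+ EC Λ :=
  QuotientAddGroup.map Λ Λ (AddMonoidHom.mulLeft ω) (fun x hx => hω x hx)

/-- The relation identifying a point of `E` with its negative. -/
def negRel (Λ : AddSubgroup ℂ) (x y : EC Λ) : Prop := x = y ∨ x = -y

/-- The quotient `E/±` of `E` by the involution `z ↦ -z`. -/
abbrev ECpm (Λ : AddSubgroup ℂ) : Type := Quot (negRel Λ)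

/-- The quotient map `q : E → E/±`. -/
def qpm (Λ : AddSubgroup ℂ) : EC Λ → ECpm Λ := Quot.mk _

/-- The Lattès-type map `φ_ω : E/± → E/±` induced by `[ω]`. -/
def lattes (Λ : AddSubgroup ℂ) (ω : ℂ) (hω : ∀ x ∈ Λ, ω * x ∈ Λ) :
    ECpm Λ → ECpm Λ :=
  Quot.map (mulE Λ ω hω) (by
    intro x y h
    rcases h with h | h
    · exact Or.inl (by rw [h])
    · exact Or.inr (by rw [h, map_neg]))

/-- For the Gaussian lattice `Λ = ℤ + ℤi`, `ω = 2 + i` and `ω' = 1 - 2i`, the diagonal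
`Δ' ⊆ E/± × E/±` satisfies `(φ_ω × φ_ω')^[2] Δ' = Δ'`: it is pre-periodic with pair `(0, 2)`. -/
theorem gaussian_lattes_diagonal_period_two
    (Λ : AddSubgroup ℂ) (hΛ : Λ = AddSubgroup.closure {(1 : ℂ), Complex.I})
    (hω : ∀ x ∈ Λ, (2 + Complex.I) * x ∈ Λ)
    (hω' : ∀ x ∈ Λ, (1 - 2 * Complex.I) * x ∈ Λ) :
    (Prod.map (lattes Λ (2 + Complex.I) hω) (lattes Λ (1 - 2 * Complex.I) hω'))^[2] ''
        Set.diagonal (ECpm Λ) = Set.diagonal (ECpm Λ) := by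

  have lmk : ∀ (ω : ℂ) (h : ∀ x ∈ Λ, ω * x ∈ Λ) (c : ℂ),
      lattes Λ ω h (Quot.mk _ ((c : ℂ) : EC Λ)) = Quot.mk _ ((ω * c : ℂ) : EC Λ) := by
    intro ω h c
    rfl
  have key : ∀ c : ℂ, (2 + Complex.I) * ((2 + Complex.I) * c)
      = -((1 - 2 * Complex.I) * ((1 - 2 * Complex.I) * c)) := by
    intro c
    linear_combination (5 * c) * Complex.I_sq
  have hneg : ∀ c : ℂ, (Quot.mk (negRel Λ) ((c : ℂ) : EC Λ))
      = Quot.mk (negRel Λ) (((-c : ℂ) : EC Λ)) := by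
    intro c
    apply Quot.sound
    right
    rw [← QuotientAddGroup.mk_neg, neg_neg]
  ext ⟨a, b⟩
  simp only [Set.mem_image, Set.mem_diagonal_iff, Function.iterate_succ,
    Function.iterate_zero, Function.comp_apply, id_eq, Prod.map_apply]
  constructor
  · rintro ⟨⟨p, p'⟩, hp, heq⟩
    replace hp : p = p' := hp
    subst hp
    have ha := congrArg Prod.fst heq
    have hb := congrArg Prod.snd heq
    simp only [Prod.map_apply] at ha hb
    rw [← ha, ← hb]
    refine Quot.induction_on p (fun z => ?_)
    refine QuotientAddGroup.induction_on z (fun c => ?_)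
    show lattes Λ _ hω (lattes Λ _ hω _) = lattes Λ _ hω' (lattes Λ _ hω' _)
    rw [lmk, lmk, lmk, lmk, key]
    exact (hneg _).symm
  · intro hab
    refine Quot.induction_on a (fun z => ?_) hab
    refine QuotientAddGroup.induction_on z (fun c hb => ?_)
    replace hb : Quot.mk (negRel Λ) ((c : ℂ) : EC Λ) = b := hb
    subst hb
    refine ⟨(Quot.mk _ ((c / (3 + 4*Complex.I) : ℂ) : EC Λ),
             Quot.mk _ ((c / (3 + 4*Complex.I) : ℂ) : EC Λ)), rfl, ?_⟩
    have h34 : (3 + 4*Complex.I) ≠ 0 := by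
      intro h
      have := congrArg Complex.im h
      simp at this
    have e1 : (2 + Complex.I) * ((2 + Complex.I) * (c / (3 + 4*Complex.I))) = c := by
      rw [← mul_div_assoc, ← mul_div_assoc, div_eq_iff h34]
      linear_combination c * Complex.I_sq
    have e2 : (1 - 2*Complex.I) * ((1 - 2*Complex.I) * (c / (3 + 4*Complex.I))) = -c := by
      rw [← mul_div_assoc, ← mul_div_assoc, div_eq_iff h34]
      linear_combination (4*c) * Complex.I_sq
    show (lattes Λ _ hω (lattes Λ _ hω _), lattes Λ _ hω' (lattes Λ _ hω' _)) = _
    rw [lmk, lmk, lmk, lmk, e1, e2, ← hneg c]
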